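/- Let V be a real inner product space and m ≥ 1. Suppose given unit vectors v_I ∈ V, one for each subset I ⊆ {1, …, m}, satisfying v_{I'} = −v_I, where I' denotes the complement of I in {1, …, m}. Suppose x₁, …, x_m ∈ V are vectors such that for every i and every subset I with i ∈ I one has ⟨xᵢ, v_I⟩ > 0. Then x₁, …, x_m are linearly independent. -/
import Mathlib


open scoped RealInnerProductSpace

theorem linearIndependent_of_separating_vectors {V : Type*}
    [NormedAddCommGroup V] [InnerProductSpace ℝ V]
    (m : ℕ) (hm : 1 ≤ m)
    (w : Finset (Fin m) → V)
    (hw_unit : ∀ I, ‖w I‖ = 1)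
    (hw_neg : ∀ I, w Iᶜ = -(w I))
    (x : Fin m → V)
    (hx : ∀ (i : Fin m) (I : Finset (Fin m)), i ∈ I → 0 < ⟪x i, w I⟫) :
    LinearIndependent ℝ x := by
  rw [Fintype.linearIndependent_iff]
  intro g hg i
  by_contra hne
  set I : Finset (Fin m) := Finset.univ.filter (fun j => 0 ≤ g j) with hI
  have hterm : ∀ j : Fin m, 0 ≤ g j * ⟪x j, w I⟫ := by
    intro j
    rcases le_or_gt 0 (g j) with h | h
    · exact mul_nonneg h (le_of_lt (hx j I (by simp [hI, h])))
    · have hjc : j ∈ Iᶜ := by simp only [hI, Finset.mem_compl, Finset.mem_filter, Finset.mem_univ, true_and]; exact not_le.mpr h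
      have := hx j Iᶜ hjc
      rw [hw_neg, inner_neg_right] at this
      have : ⟪x j, w I⟫ < 0 := by linarith
      exact le_of_lt (mul_pos_of_neg_of_neg h this)
  have hpos : 0 < g i * ⟪x i, w I⟫ := by
    rcases lt_or_gt_of_ne hne with h | h
    · have hic : i ∈ Iᶜ := by simp only [hI, Finset.mem_compl, Finset.mem_filter, Finset.mem_univ, true_and]; exact not_le.mpr h
      have := hx i Iᶜ hic
      rw [hw_neg, inner_neg_right] at this
      exact mul_pos_of_neg_of_neg h (by linarith)
    · exact mul_pos h (hx i I (by simp [hI, le_of_lt h]))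
  have key : 0 < ⟪∑ j, g j • x j, w I⟫ := by
    rw [sum_inner]
    simp_rw [real_inner_smul_left]
    exact Finset.sum_pos' (fun j _ => hterm j) ⟨i, Finset.mem_univ i, hpos⟩
  rw [hg, inner_zero_left] at key
  exact lt_irrefl 0 key
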